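/- Assume gcd(l, r−1) = 1 and [l]_{r−1} ≥ 2, and let κ be the unique integer with 1 ≤ κ ≤ l−1 and κ·(l−(r−1)) ≡ 1 (mod l). Then κ > ν = ⌊l/(r−1)⌋, the point n^(κ) = (1/l)(κ,…,κ,1) lies in σ0 ∩ N but not in the junior simplex s_G, and n^(κ) cannot be written as a linear combination with nonnegative integer coefficients of elements of s_G ∩ N. -/

import Mathlib

noncomputable section

/-- the generator `(1/l)(1,…,1,l−(r−1))` of the lattice of weights -/
def wgt (l r : ℕ) : Fin r → ℚ :=
  fun i => (if (i : ℕ) + 1 = r then (l : ℚ) - ((r : ℚ) - 1) else 1) / l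

/-- membership in the lattice `N = ℤ^r + ℤ·(1/l)(1,…,1,l−(r−1))` -/
def memN (l r : ℕ) (v : Fin r → ℚ) : Prop :=
  ∃ (a : Fin r → ℤ) (c : ℤ), v = (fun i => (a i : ℚ)) + c • wgt l r

/-- the point `n⁽ᵏ⁾ = (1/l)(κ,…,κ,1)` (since `[κ(l−(r−1))]_l = 1`) -/
def nK (l r κ : ℕ) : Fin r → ℚ :=
  fun i => (if (i : ℕ) + 1 = r then 1 else (κ : ℚ)) / l

lemma sum_ite_aux (s : ℕ) (x y : ℚ) :
    ∑ i ∈ Finset.range (s+1), (if i + 1 = s + 1 then x else y) = s * y + x := by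
  rw [Finset.sum_range_succ]
  have h : ∀ i ∈ Finset.range s, (if i + 1 = s + 1 then x else y) = y := by
    intro i hi
    rw [if_neg]
    simp only [Finset.mem_range] at hi
    omega
  rw [Finset.sum_congr rfl h, Finset.sum_const, if_pos rfl]
  simp [nsmul_eq_mul]

/-- key lemma: any lattice point of the junior simplex has last coordinate
`m/l` with `m : ℕ`, `m ≠ 1`. -/
lemma junior_last (l r : ℕ) (hr : 2 ≤ r) (hl : r ≤ l) (hr3 : 3 ≤ r - 1)
    (hmod : 2 ≤ l % (r - 1)) (v : Fin r → ℚ) (hN : memN l r v)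
    (hpos : ∀ i, 0 ≤ v i) (hsum : ∑ i, v i = 1) :
    ∃ m : ℕ, v ⟨r - 1, by omega⟩ = (m : ℚ) / l ∧ m ≠ 1 := by
  have hl0 : (0:ℚ) < (l:ℚ) := by exact_mod_cast (by omega : 0 < l)
  obtain ⟨a, cc, rfl⟩ := hN
  set lst : Fin r := ⟨r - 1, by omega⟩ with hlst
  set w : Fin r → ℤ := fun i => a i * l + cc * (if (i : ℕ) + 1 = r then (l:ℤ) - ((r:ℤ) - 1) else 1)
    with hwdef
  have hw : ∀ i, ((fun i => (a i : ℚ)) + cc • wgt l r) i = (w i : ℚ) / l := by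
    intro i
    have e1 : ((fun i => (a i : ℚ)) + cc • wgt l r) i
        = (a i : ℚ) + (cc : ℚ) *
            ((if (i : ℕ) + 1 = r then (l : ℚ) - ((r : ℚ) - 1) else 1) / l) := by
      rw [Pi.add_apply, Pi.smul_apply, zsmul_eq_mul]
      rfl
    rw [e1]
    by_cases hi : (i : ℕ) + 1 = r
    · have hwi : w i = a i * l + cc * ((l : ℤ) - ((r : ℤ) - 1)) := by
        show a i * (l:ℤ) + cc * (if (i : ℕ) + 1 = r then (l:ℤ) - ((r:ℤ) - 1) else 1) = _
        rw [if_pos hi]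
      rw [hwi, if_pos hi]
      push_cast
      try field_simp
      try ring
    · have hwi : w i = a i * l + cc := by
        show a i * (l:ℤ) + cc * (if (i : ℕ) + 1 = r then (l:ℤ) - ((r:ℤ) - 1) else 1) = _
        rw [if_neg hi, mul_one]
      rw [hwi, if_neg hi]
      push_cast
      try field_simp
      try ring
  have hw0 : ∀ i, (0:ℤ) ≤ w i := by
    intro i
    have := hpos i
    rw [hw i] at this
    have : (0:ℚ) ≤ (w i : ℚ) := by
      have := mul_le_mul_of_nonneg_right this (le_of_lt hl0)
      simpa [div_mul_cancel₀, ne_of_gt hl0] using this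
    exact_mod_cast this
  have hwsum : ∑ i, w i = (l : ℤ) := by
    have h1 : (∑ i, ((w i : ℚ) / l)) = 1 := by
      rw [← hsum]; exact Finset.sum_congr rfl fun i _ => (hw i).symm
    rw [← Finset.sum_div] at h1
    have h2 : (∑ i, (w i : ℚ)) = l := by
      field_simp at h1; exact_mod_cast h1
    exact_mod_cast h2
  refine ⟨(w lst).toNat, ?_, ?_⟩
  · rw [hw lst]
    congr 1
    exact_mod_cast (Int.toNat_of_nonneg (hw0 lst)).symm
  · intro h1
    have hwlst : w lst = 1 := by omega
    -- the remaining coordinates sum to l - 1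
    have herase : ∑ i ∈ Finset.univ.erase lst, w i = (l : ℤ) - 1 := by
      have := Finset.add_sum_erase Finset.univ w (Finset.mem_univ lst)
      omega
    have hub : ∀ i ∈ Finset.univ.erase lst, w i ≤ (l : ℤ) - 1 := by
      intro i hi
      calc w i ≤ ∑ j ∈ Finset.univ.erase lst, w j :=
            Finset.single_le_sum (fun j _ => hw0 j) hi
        _ = (l : ℤ) - 1 := herase
    -- off the last coordinate, w i = a i * l + cc
    have hoff : ∀ i ∈ Finset.univ.erase lst, w i = a i * l + cc := by
      intro i hi
      have hi' : (i : ℕ) + 1 ≠ r := by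
        rcases Finset.mem_erase.mp hi with ⟨hne, -⟩
        intro h
        apply hne
        apply Fin.ext
        simp only [hlst]
        omega
      simp [hwdef, hi']
    have h0r : 0 < r := by omega
    set i0 : Fin r := ⟨0, h0r⟩ with hi0def
    have hi0 : i0 ∈ Finset.univ.erase lst := by
      refine Finset.mem_erase.mpr ⟨?_, Finset.mem_univ _⟩
      intro h
      have := congrArg (Fin.val) h
      simp only [hi0def, hlst] at this
      omega
    set z := w i0 with hz
    have hzval : z = a i0 * l + cc := by rw [hz]; exact hoff i0 hi0
    have hall : ∀ i ∈ Finset.univ.erase lst, w i = z := by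
      intro i hi
      have hd : (l : ℤ) ∣ (w i - z) := by
        rw [hoff i hi, hzval]
        exact ⟨a i - a i0, by ring⟩
      have habs : |w i - z| < (l : ℤ) := by
        have h1 := hw0 i
        have h2 := hw0 i0
        have h3 := hub i hi
        have h4 := hub i0 hi0
        rw [abs_lt]
        constructor <;> omega
      have := Int.eq_zero_of_abs_lt_dvd hd habs
      omega
    have hcard : (Finset.univ.erase lst).card = r - 1 := by
      rw [Finset.card_erase_of_mem (Finset.mem_univ _)]
      simp
    have hsum2 : ((r : ℤ) - 1) * z = (l : ℤ) - 1 := by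
      rw [← herase, Finset.sum_congr rfl hall, Finset.sum_const, hcard]
      have : ((r - 1 : ℕ) : ℤ) = (r : ℤ) - 1 := by omega
      rw [← this]
      simp [zsmul_eq_mul]
    have hz0 : 0 ≤ z := hw0 _
    set k := z.toNat with hk
    have hzk : z = (k : ℤ) := (Int.toNat_of_nonneg hz0).symm
    have hnat : (r - 1) * k = l - 1 := by
      have : ((r - 1 : ℕ) : ℤ) * (k : ℤ) = ((l - 1 : ℕ) : ℤ) := by
        rw [← hzk]
        have h1 : ((r - 1 : ℕ) : ℤ) = (r : ℤ) - 1 := by omega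
        have h2 : ((l - 1 : ℕ) : ℤ) = (l : ℤ) - 1 := by omega
        rw [h1, h2]; exact hsum2
      exact_mod_cast this
    have : l % (r - 1) = 1 := by
      have hll : l = (r - 1) * k + 1 := by omega
      rw [hll, Nat.mul_add_mod]
      exact Nat.mod_eq_of_lt (by omega)
    omega

/-- Assume `gcd(l, r−1) = 1` and `[l]_{r−1} ≥ 2`, and let `κ` be the unique
integer with `1 ≤ κ ≤ l−1` and `κ·(l−(r−1)) ≡ 1 (mod l)`.  Then `κ > ⌊l/(r−1)⌋`,
the point `n⁽ᵏ⁾ = (1/l)(κ,…,κ,1)` lies in `σ0 ∩ N` but not in the junior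
simplex, and it is not a nonnegative-integer combination of lattice points of
the junior simplex. -/
theorem obstruction_point (l r : ℕ) (hr : 2 ≤ r) (hl : r ≤ l)
    (hgcd : Nat.gcd l (r - 1) = 1) (hmod : 2 ≤ l % (r - 1))
    (κ : ℕ) (hκ1 : 1 ≤ κ) (hκ2 : κ ≤ l - 1)
    (hκ : (κ * (l - (r - 1))) % l = 1) :
    l / (r - 1) < κ ∧
    memN l r (nK l r κ) ∧
    (∀ i, 0 ≤ nK l r κ i) ∧
    (∑ i, nK l r κ i ≠ 1) ∧
    ¬ ∃ (t : Finset (Fin r → ℚ)) (c : (Fin r → ℚ) → ℕ),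
        (∀ v ∈ t, memN l r v ∧ (∀ i, 0 ≤ v i) ∧ ∑ i, v i = 1) ∧
        nK l r κ = ∑ v ∈ t, (c v : ℚ) • v := by
  have hr3 : 3 ≤ r - 1 := by
    have := Nat.mod_lt l (show 0 < r - 1 by omega)
    omega
  have hl4 : 4 ≤ l := by omega
  have hl0 : (0:ℚ) < (l:ℚ) := by exact_mod_cast (by omega : 0 < l)
  -- basic arithmetic on κ
  set d := l - (r - 1) with hd
  set R := r - 1 with hR
  set q := κ * d / l with hq
  have hq1 : κ * d = q * l + 1 := by
    have h := Nat.div_add_mod (κ * d) l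
    rw [hκ, ← hq] at h
    linarith [h]
  have hq1' : (κ : ℤ) * (d : ℤ) = (q : ℤ) * (l : ℤ) + 1 := by exact_mod_cast hq1
  have hdR : (R : ℤ) + (d : ℤ) = (l : ℤ) := by
    have : R + d = l := by omega
    exact_mod_cast this
  set M : ℤ := (κ : ℤ) - (q : ℤ) with hMdef
  have hMZ : (κ : ℤ) * (R : ℤ) + 1 = M * (l : ℤ) := by
    rw [hMdef]
    linear_combination (κ : ℤ) * hdR - hq1'
  have hlZ : (0 : ℤ) < (l : ℤ) := by exact_mod_cast (show 0 < l by omega)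
  have hκR : (0 : ℤ) ≤ (κ : ℤ) * (R : ℤ) := by positivity
  have hM1 : 1 ≤ M := by nlinarith [hMZ, hlZ, hκR]
  have hM2 : 2 ≤ M := by
    rcases lt_or_ge M 2 with h | h
    · exfalso
      have hMe : M = 1 := by omega
      rw [hMe, one_mul] at hMZ
      have hln : κ * R + 1 = l := by exact_mod_cast hMZ
      have h1 : (κ * R + 1) % R = 1 % R := Nat.mul_add_mod' κ R 1
      have h2 : 1 % R = 1 := Nat.mod_eq_of_lt (by omega)
      have : l % R = 1 := by rw [← hln, h1, h2]
      omega
    · exact h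
  have hbigZ : 2 * (l : ℤ) ≤ (κ : ℤ) * (R : ℤ) + 1 := by nlinarith [hMZ, hlZ, hM2]
  have hbig : 2 * l ≤ κ * R + 1 := by exact_mod_cast hbigZ
  refine ⟨?_, ?_, ?_, ?_, ?_⟩
  · -- l / (r-1) < κ
    rw [Nat.div_lt_iff_lt_mul (show 0 < r - 1 by omega)]
    have : κ * R ≤ κ * (r - 1) := by rw [hR]
    omega
  · -- memN
    refine ⟨fun i => if (i : ℕ) + 1 = r then -(q : ℤ) else 0, (κ : ℤ), ?_⟩
    have hcast : ((d : ℕ) : ℚ) = (l : ℚ) - ((r : ℚ) - 1) := by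
      have h0 : d + (r - 1) = l := by omega
      have h1 : ((d : ℕ) : ℚ) + ((r - 1 : ℕ) : ℚ) = (l : ℚ) := by exact_mod_cast h0
      have h2 : ((r - 1 : ℕ) : ℚ) = (r : ℚ) - 1 := by
        have : (1:ℕ) ≤ r := by omega
        push_cast [this]; ring
      linarith [h1, h2]
    have hq1' : (κ : ℚ) * ((l : ℚ) - ((r : ℚ) - 1)) = (q : ℚ) * l + 1 := by
      rw [← hcast]
      exact_mod_cast hq1
    funext i
    have e1 : ((fun i : Fin r => ((if (i : ℕ) + 1 = r then -(q : ℤ) else 0 : ℤ) : ℚ))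
          + (κ : ℤ) • wgt l r) i
        = ((if (i : ℕ) + 1 = r then -(q : ℤ) else 0 : ℤ) : ℚ) + (κ : ℚ) *
            ((if (i : ℕ) + 1 = r then (l : ℚ) - ((r : ℚ) - 1) else 1) / l) := by
      rw [Pi.add_apply, Pi.smul_apply, zsmul_eq_mul]
      rfl
    rw [e1]
    show (if (i : ℕ) + 1 = r then (1:ℚ) else (κ:ℚ)) / l = _
    by_cases hi : (i : ℕ) + 1 = r
    · rw [if_pos hi, if_pos hi, if_pos hi]
      push_cast
      field_simp
      linarith [hq1']
    · rw [if_neg hi, if_neg hi, if_neg hi]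
      push_cast
      field_simp
      ring
  · -- nonneg
    intro i
    simp only [nK]
    apply div_nonneg _ (le_of_lt hl0)
    by_cases hi : (i : ℕ) + 1 = r <;> simp [hi] <;> positivity
  · -- sum ≠ 1
    intro h
    obtain ⟨s, hs⟩ : ∃ s, r = s + 1 := ⟨r - 1, by omega⟩
    have hsum : ∑ i, nK l r κ i = ((s : ℚ) * κ + 1) / l := by
      simp only [nK]
      rw [← Finset.sum_div]
      congr 1
      subst hs
      rw [Fin.sum_univ_eq_sum_range (fun i => if i + 1 = s + 1 then (1:ℚ) else (κ:ℚ))]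
      rw [sum_ite_aux]
    rw [hsum, div_eq_one_iff_eq (ne_of_gt hl0)] at h
    have hnat : s * κ + 1 = l := by exact_mod_cast h
    have hsR : s = R := by omega
    have : κ * R = s * κ := by rw [hsR, Nat.mul_comm]
    omega
  · -- no nonneg integer combination
    rintro ⟨t, c, hjun, heq⟩
    set lst : Fin r := ⟨r - 1, by omega⟩ with hlstdef
    have hlst := congrFun heq lst
    have hnKlst : nK l r κ lst = 1 / l := by
      simp only [nK, hlstdef]
      rw [if_pos]
      omega
    have hsumapp : (∑ v ∈ t, (c v : ℚ) • v) lst = ∑ v ∈ t, (c v : ℚ) * v lst := by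
      rw [Finset.sum_apply]
      simp
    rw [hnKlst, hsumapp] at hlst
    have key : ∀ v ∈ t, ∃ m : ℕ, v lst = (m : ℚ) / l ∧ m ≠ 1 := by
      intro v hv
      obtain ⟨h1, h2, h3⟩ := hjun v hv
      exact junior_last l r hr hl hr3 hmod v h1 h2 h3
    classical
    set g : (Fin r → ℚ) → ℕ := fun v =>
      if h : ∃ m : ℕ, v lst = (m : ℚ) / l ∧ m ≠ 1 then h.choose else 0 with hgdef
    have hg : ∀ v ∈ t, v lst = (g v : ℚ) / l ∧ g v ≠ 1 := by
      intro v hv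
      have h := key v hv
      simp only [hgdef, dif_pos h]
      exact h.choose_spec
    have hmain : (1 : ℚ) / l = (∑ v ∈ t, ((c v * g v : ℕ) : ℚ)) / l := by
      rw [hlst, Finset.sum_div]
      apply Finset.sum_congr rfl
      intro v hv
      rw [(hg v hv).1]
      push_cast
      ring
    have hone : (1 : ℚ) = ∑ v ∈ t, ((c v * g v : ℕ) : ℚ) := by
      rw [div_eq_div_iff (ne_of_gt hl0) (ne_of_gt hl0)] at hmain
      exact mul_right_cancel₀ (ne_of_gt hl0) hmain
    have hone' : ∑ v ∈ t, c v * g v = 1 := by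
      have h : ((∑ v ∈ t, c v * g v : ℕ) : ℚ) = 1 := by
        rw [Nat.cast_sum]
        exact hone.symm
      exact_mod_cast h
    obtain ⟨v, hv, hvne⟩ : ∃ v ∈ t, c v * g v ≠ 0 := by
      by_contra h
      push_neg at h
      rw [Finset.sum_eq_zero h] at hone'
      exact one_ne_zero hone'.symm
    have hle : c v * g v ≤ 1 := hone' ▸ Finset.single_le_sum (f := fun v => c v * g v)
      (fun _ _ => Nat.zero_le _) hv
    have : c v * g v = 1 := by omega
    have := Nat.eq_one_of_mul_eq_one_left this
    exact (hg v hv).2 this
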